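/- arXiv:1411.2520 — 2 statements merged into one kernel-verified Lean document; each statement's English description precedes it below -/
import Mathlib

section
/- Let G be a profinite group, H an open normal subgroup, and g ∈ G an element of pro-p order (i.e., the closure of the subgroup generated by g is a pro-p group) normalizing H. Let (η, V) be a finite-dimensional irreducible representation of H over an algebraically closed field of characteristic 0 with open kernel, such that η(g x g^{-1}) ≅ η for all x ∈ H. Then there exists an irreducible representation η̃ of the closed subgroup generated by H and g, with open kernel, such that η̃ restricted to H is isomorphic to η. Moreover the extending operator η̃(g) can be chosen of finite p-power order. -/
theorem aux_schur {k V : Type*} [Field k] [IsAlgClosed k]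
    [AddCommGroup V] [Module k V] [FiniteDimensional k V] [Nontrivial V]
    {H : Type*} [Group H] (η : H →* (V →ₗ[k] V)ˣ)
    (hηirr : ∀ W : Submodule k V,
      (∀ (h : H) (v : V), v ∈ W → (η h : V →ₗ[k] V) v ∈ W) → W = ⊥ ∨ W = ⊤)
    (T : V →ₗ[k] V) (hT : ∀ x : H, T * (η x : V →ₗ[k] V) = (η x : V →ₗ[k] V) * T) :
    ∃ c : k, T = c • LinearMap.id := by
  obtain ⟨c, hc⟩ := Module.End.exists_eigenvalue (T : Module.End k V)
  refine ⟨c, ?_⟩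
  have hinv : ∀ (h : H) (v : V), v ∈ Module.End.eigenspace T c →
      (η h : V →ₗ[k] V) v ∈ Module.End.eigenspace T c := by
    intro h v hv
    rw [Module.End.mem_eigenspace_iff] at hv ⊢
    have := congrArg (fun (S : V →ₗ[k] V) => S v) (hT h)
    simp only [Module.End.mul_apply] at this
    rw [this, hv, map_smul]
  rcases hηirr _ hinv with hbot | htop
  · exact absurd hbot hc
  · ext v
    have hv : v ∈ Module.End.eigenspace T c := htop ▸ Submodule.mem_top
    rw [Module.End.mem_eigenspace_iff] at hv
    simpa using hv

/-- Extension of an irreducible conjugation-stable representation along an element of pro-`p`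
order (Lemma on extending representations).  `G` is a profinite group, `H` an open normal
subgroup, `g ∈ G` an element of pro-`p` order (the topological closure `P` of `⟨g⟩` is pro-`p`:
every open normal subgroup of `P` has `p`-power index), and `(η, V)` a finite-dimensional
irreducible representation of `H` over an algebraically closed field of characteristic `0`
with open kernel, with `η (g · g⁻¹) ≅ η`.  Then `η` extends to an irreducible representation
`η̃`, with open kernel, of the closed subgroup generated by `H` and `g`, whose restriction to
`H` is isomorphic to `η`, and `η̃ (g)` can be chosen of finite `p`-power order. -/
theorem exists_extension_of_conj_invariant_irreducible
    {G : Type*} [Group G] [TopologicalSpace G] [IsTopologicalGroup G]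
    [CompactSpace G] [TotallyDisconnectedSpace G] [T2Space G]
    {k V : Type*} [Field k] [IsAlgClosed k] [CharZero k]
    [AddCommGroup V] [Module k V] [FiniteDimensional k V]
    (p : ℕ) (hp : p.Prime)
    (H : Subgroup G) (hHopen : IsOpen (H : Set G)) (hHnorm : H.Normal)
    (g : G)
    (hproP : ∀ U : Subgroup ((Subgroup.zpowers g).topologicalClosure),
      IsOpen (U : Set ((Subgroup.zpowers g).topologicalClosure)) → U.Normal →
        ∃ m : ℕ, U.index = p ^ m)
    (η : H →* (V →ₗ[k] V)ˣ)
    (hηker : IsOpen ((η.ker : Set H)))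
    (hηirr : ∀ W : Submodule k V,
      (∀ (h : H) (v : V), v ∈ W → (η h : V →ₗ[k] V) v ∈ W) → W = ⊥ ∨ W = ⊤)
    (hconj : ∃ A : (V →ₗ[k] V)ˣ, ∀ (x : G) (hx : x ∈ H),
      η ⟨g * x * g⁻¹, hHnorm.conj_mem x hx g⟩ = A * η ⟨x, hx⟩ * A⁻¹) :
    ∃ ηt : ((Subgroup.closure ((H : Set G) ∪ {g})).topologicalClosure) →* (V →ₗ[k] V)ˣ,
      IsOpen ((ηt.ker : Set ((Subgroup.closure ((H : Set G) ∪ {g})).topologicalClosure))) ∧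
      (∀ W : Submodule k V,
        (∀ (t : (Subgroup.closure ((H : Set G) ∪ {g})).topologicalClosure) (v : V),
          v ∈ W → (ηt t : V →ₗ[k] V) v ∈ W) → W = ⊥ ∨ W = ⊤) ∧
      (∃ B : (V →ₗ[k] V)ˣ, ∀ (x : G) (hx : x ∈ H),
        ηt ⟨x, (Subgroup.le_topologicalClosure _)
            (Subgroup.subset_closure (Set.mem_union_left _ hx))⟩ =
          B * η ⟨x, hx⟩ * B⁻¹) ∧
      (∃ m : ℕ,
        (ηt ⟨g, (Subgroup.le_topologicalClosure _)
            (Subgroup.subset_closure (Set.mem_union_right _ rfl))⟩) ^ (p ^ m) = 1) := by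
  classical
  rcases subsingleton_or_nontrivial V with hV | hV
  · -- trivial case : V is a singleton
    have hEnd : Subsingleton (V →ₗ[k] V) := ⟨fun a b => LinearMap.ext fun v => Subsingleton.elim _ _⟩
    have hU : Subsingleton ((V →ₗ[k] V)ˣ) := ⟨fun a b => Units.ext (Subsingleton.elim _ _)⟩
    refine ⟨1, ?_, ?_, ⟨1, ?_⟩, ⟨0, ?_⟩⟩
    · have h1 : (1 : _ →* (V →ₗ[k] V)ˣ).ker =
        (⊤ : Subgroup ((Subgroup.closure ((H : Set G) ∪ {g})).topologicalClosure)) := by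
        ext x; simp [MonoidHom.mem_ker]
      rw [h1, Subgroup.coe_top]; exact isOpen_univ
    · intro W _
      left
      ext v
      simp [Subsingleton.elim v 0]
    · intro x hx
      simp [Subsingleton.elim (η ⟨x, hx⟩) 1]
    · simp
  -- main case
  obtain ⟨A0, hA0⟩ := hconj
  set K := Subgroup.closure ((H : Set G) ∪ {g}) with hKdef
  have hHK : H ≤ K := fun x hx => Subgroup.subset_closure (Or.inl hx)
  have hgK : g ∈ K := Subgroup.subset_closure (Or.inr rfl)
  have hKopen : IsOpen (K : Set G) := Subgroup.isOpen_mono hHK hHopen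
  have hKclosed : IsClosed (K : Set G) := K.isClosed_of_isOpen hKopen
  have hKc : ∀ x : G, x ∈ K.topologicalClosure → x ∈ K := by
    intro x hx
    have h1 : x ∈ closure (K : Set G) := hx
    rwa [hKclosed.closure_eq] at h1
  -- the subgroup M = image of ker η in G
  set M := η.ker.map H.subtype with hMdef
  have hMH : M ≤ H := by
    intro x hx
    rcases Subgroup.mem_map.mp hx with ⟨y, _, rfl⟩
    exact y.2
  have hMmem : ∀ (x : G) (hx : x ∈ H), (x ∈ M ↔ η ⟨x, hx⟩ = 1) := by
    intro x hx
    constructor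
    · intro hm
      rcases Subgroup.mem_map.mp hm with ⟨y, hy, hyx⟩
      have : (⟨x, hx⟩ : H) = y := Subtype.ext hyx.symm
      rw [this]
      exact hy
    · intro h1
      exact Subgroup.mem_map.mpr ⟨⟨x, hx⟩, h1, rfl⟩
  have hMopen : IsOpen (M : Set G) := by
    have h1 : (M : Set G) = Subtype.val '' (η.ker : Set H) := by
      ext x
      simp only [hMdef, Subgroup.coe_map, Subgroup.coe_subtype, Set.mem_image, SetLike.mem_coe]
    rw [h1]
    exact hHopen.isOpenEmbedding_subtypeVal.isOpenMap _ hηker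
  have hMclosed : IsClosed (M : Set G) := M.isClosed_of_isOpen hMopen
  -- g normalizes M
  have hconjH : ∀ (x : G), x ∈ H → g * x * g⁻¹ ∈ H := fun x hx => hHnorm.conj_mem x hx g
  have hconjH' : ∀ (x : G), x ∈ H → g⁻¹ * x * g ∈ H := by
    intro x hx
    have := hHnorm.conj_mem x hx g⁻¹
    simpa using this
  have hMconj : ∀ x ∈ M, g * x * g⁻¹ ∈ M := by
    intro x hx
    have hxH : x ∈ H := hMH hx
    refine (hMmem _ (hconjH x hxH)).mpr ?_
    rw [hA0 x hxH, (hMmem x hxH).mp hx]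
    simp
  have hMconj' : ∀ x ∈ M, g⁻¹ * x * g ∈ M := by
    intro x hx
    have hxH : x ∈ H := hMH hx
    have hyH : g⁻¹ * x * g ∈ H := hconjH' x hxH
    refine (hMmem _ hyH).mpr ?_
    have h2 : g * (g⁻¹ * x * g) * g⁻¹ = x := by group
    have h3 := hA0 (g⁻¹ * x * g) hyH
    have h4 : (⟨g * (g⁻¹ * x * g) * g⁻¹, hHnorm.conj_mem _ hyH g⟩ : H) = ⟨x, hxH⟩ :=
      Subtype.ext h2
    rw [h4, (hMmem x hxH).mp hx] at h3
    have h5 : A0 * η ⟨g⁻¹ * x * g, hyH⟩ * A0⁻¹ = 1 := h3.symm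
    calc η ⟨g⁻¹ * x * g, hyH⟩ = A0⁻¹ * (A0 * η ⟨g⁻¹ * x * g, hyH⟩ * A0⁻¹) * A0 := by group
    _ = A0⁻¹ * 1 * A0 := by rw [h5]
    _ = 1 := by group
  have hgnormM : g ∈ Subgroup.normalizer (M : Set G) := by
    rw [Subgroup.mem_normalizer_iff]
    intro x
    constructor
    · exact fun hx => hMconj x hx
    · intro hx
      have := hMconj' _ hx
      simpa [mul_assoc] using this
  -- P normalizes M
  set P := (Subgroup.zpowers g).topologicalClosure with hPdef
  have hgP : g ∈ P := Subgroup.le_topologicalClosure _ (Subgroup.mem_zpowers g)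
  have hPnorm : ∀ x ∈ P, ∀ m ∈ M, x * m * x⁻¹ ∈ M := by
    have hC : (P : Set G) ⊆ ⋂ m ∈ (M : Set G), (fun x => x * m * x⁻¹) ⁻¹' (M : Set G) := by
      rw [hPdef, Subgroup.topologicalClosure_coe]
      apply closure_minimal
      · intro x hx
        simp only [Set.mem_iInter, Set.mem_preimage, SetLike.mem_coe]
        intro m hm
        have hxn : x ∈ Subgroup.normalizer (M : Set G) := Subgroup.zpowers_le.mpr hgnormM hx
        exact (Subgroup.mem_normalizer_iff.mp hxn m).mp hm
      · apply isClosed_biInter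
        intro m _
        exact IsClosed.preimage ((continuous_id.mul continuous_const).mul continuous_inv) hMclosed
    intro x hx m hm
    have h2 := hC hx
    simp only [Set.mem_iInter, Set.mem_preimage, SetLike.mem_coe] at h2
    exact h2 m hm
  -- the open normal subgroup U of P, and p-power order elements
  set U := M.subgroupOf P with hUdef
  have hUopen : IsOpen (U : Set P) := by
    have h1 : (U : Set P) = Subtype.val ⁻¹' (M : Set G) := by
      ext x
      simp [hUdef, Subgroup.mem_subgroupOf]
    rw [h1]
    exact hMopen.preimage continuous_subtype_val
  have hUnormal : U.Normal := by
    constructor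
    intro u hu x
    rw [Subgroup.mem_subgroupOf] at hu ⊢
    exact hPnorm x.1 x.2 u.1 hu
  obtain ⟨a, ha⟩ := hproP U hUopen hUnormal
  haveI : U.FiniteIndex := ⟨by rw [ha]; exact pow_ne_zero _ hp.ne_zero⟩
  haveI := hUnormal
  have hdvd : orderOf (QuotientGroup.mk (s := U) (⟨g, hgP⟩ : P)) ∣ p ^ a := by
    rw [← ha, Subgroup.index_eq_card]
    exact orderOf_dvd_natCard _
  obtain ⟨c, -, hc⟩ := (Nat.dvd_prime_pow hp).mp hdvd
  have hgpcM : g ^ (p ^ c) ∈ M := by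
    have h1 : (QuotientGroup.mk (s := U) (⟨g, hgP⟩ : P)) ^ (p ^ c) = 1 := by
      rw [← hc]; exact pow_orderOf_eq_one _
    have h2 : ((⟨g, hgP⟩ : P) ^ (p ^ c)) ∈ U := by
      rwa [← QuotientGroup.eq_one_iff, QuotientGroup.mk_pow]
    rw [Subgroup.mem_subgroupOf] at h2
    simpa using h2
  -- the order n of g modulo H
  haveI := hHnorm
  set n := orderOf (QuotientGroup.mk (s := H) g) with hndef
  have hgpcH : g ^ (p ^ c) ∈ H := hMH hgpcM
  have hmk1 : (QuotientGroup.mk (s := H) g) ^ (p ^ c) = 1 := by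
    rw [← QuotientGroup.mk_pow, QuotientGroup.eq_one_iff]
    exact hgpcH
  have hfin : IsOfFinOrder (QuotientGroup.mk (s := H) g) :=
    isOfFinOrder_iff_pow_eq_one.mpr ⟨p ^ c, pow_pos hp.pos c, hmk1⟩
  have hnpos : 0 < n := hfin.orderOf_pos
  have hndvd : n ∣ p ^ c := orderOf_dvd_of_pow_eq_one hmk1
  have hgnH : g ^ n ∈ H := by
    rw [← QuotientGroup.eq_one_iff, QuotientGroup.mk_pow]
    exact pow_orderOf_eq_one _
  have hgzH : ∀ j : ℤ, g ^ j ∈ H ↔ (n : ℤ) ∣ j := by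
    intro j
    rw [hndef, orderOf_dvd_iff_zpow_eq_one, ← QuotientGroup.mk_zpow, QuotientGroup.eq_one_iff]
  -- intertwining for all integer powers of g
  have conjmem : ∀ (j : ℤ) (x : G), x ∈ H → g ^ j * x * g ^ (-j) ∈ H := by
    intro j x hx
    have h1 := hHnorm.conj_mem x hx (g ^ j)
    rwa [← zpow_neg] at h1
  have hcong : ∀ (x y : G) (hx : x ∈ H) (hy : y ∈ H), x = y → η ⟨x, hx⟩ = η ⟨y, hy⟩ := by
    rintro x y hx hy rfl; rfl
  have hA0inv : ∀ (x : G) (hx : x ∈ H),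
      η ⟨g⁻¹ * x * g, hconjH' x hx⟩ = A0⁻¹ * η ⟨x, hx⟩ * A0 := by
    intro x hx
    have hy : g⁻¹ * x * g ∈ H := hconjH' x hx
    have h3 := hA0 (g⁻¹ * x * g) hy
    rw [hcong _ x _ hx (by group)] at h3
    rw [h3]; group
  have hA0z : ∀ (j : ℤ) (x : G) (hx : x ∈ H),
      η ⟨g ^ j * x * g ^ (-j), conjmem j x hx⟩ = A0 ^ j * η ⟨x, hx⟩ * A0 ^ (-j) := by
    intro j
    induction j using Int.induction_on with
    | zero =>
      intro x hx
      rw [hcong _ x _ hx (by group)]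
      simp
    | succ i ih =>
      intro x hx
      have hy : g ^ (i : ℤ) * x * g ^ (-(i : ℤ)) ∈ H := conjmem _ x hx
      have h1 : g ^ ((i : ℤ) + 1) * x * g ^ (-((i : ℤ) + 1)) =
          g * (g ^ (i : ℤ) * x * g ^ (-(i : ℤ))) * g⁻¹ := by group
      rw [hcong _ _ _ (hconjH _ hy) h1, hA0 _ hy, ih x hx]
      group
    | pred i ih =>
      intro x hx
      have hy : g ^ (-(i : ℤ)) * x * g ^ (-(-(i : ℤ))) ∈ H := conjmem _ x hx
      have h1 : g ^ (-(i : ℤ) - 1) * x * g ^ (-(-(i : ℤ) - 1)) =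
          g⁻¹ * (g ^ (-(i : ℤ)) * x * g ^ (-(-(i : ℤ)))) * g := by group
      rw [hcong _ _ _ (hconjH' _ hy) h1, hA0inv _ hy, ih x hx]
      group
  -- Schur + normalization of the intertwiner
  set e : H := ⟨g ^ n, hgnH⟩ with hedef
  set Tu : (V →ₗ[k] V)ˣ := (η e)⁻¹ * A0 ^ (n : ℤ) with hTudef
  have hTcomm : ∀ x : H, Tu * η x = η x * Tu := by
    intro x
    have h1 : η ⟨g ^ (n : ℤ) * x.1 * g ^ (-(n : ℤ)), conjmem _ x.1 x.2⟩ =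
        A0 ^ (n : ℤ) * η ⟨x.1, x.2⟩ * A0 ^ (-(n : ℤ)) := hA0z (n : ℤ) x.1 x.2
    have h2 : (⟨g ^ (n : ℤ) * x.1 * g ^ (-(n : ℤ)), conjmem _ x.1 x.2⟩ : H) = e * x * e⁻¹ := by
      apply Subtype.ext
      show g ^ (n : ℤ) * x.1 * g ^ (-(n : ℤ)) = (g ^ n) * x.1 * (g ^ n)⁻¹
      rw [zpow_natCast, zpow_neg, zpow_natCast]
    have h3 : (⟨x.1, x.2⟩ : H) = x := rfl
    rw [h2, h3, map_mul, map_mul, map_inv] at h1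
    -- η e * η x * (η e)⁻¹ = A0^n * η x * A0^(-n)
    calc Tu * η x = (η e)⁻¹ * (A0 ^ (n : ℤ) * η x * A0 ^ (-(n : ℤ)) * A0 ^ (n : ℤ)) := by
          rw [hTudef]; group
    _ = (η e)⁻¹ * (η e * η x * (η e)⁻¹ * A0 ^ (n : ℤ)) := by rw [h1]
    _ = η x * Tu := by rw [hTudef]; group
  obtain ⟨c0, hc0⟩ := aux_schur η hηirr (Tu : V →ₗ[k] V) (by
    intro x
    have := congrArg (Units.val) (hTcomm x)
    simpa using this)
  have hc0ne : c0 ≠ 0 := by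
    intro hc00
    obtain ⟨v, hv⟩ := exists_ne (0 : V)
    have h1 : (Tu : V →ₗ[k] V) v = 0 := by rw [hc0, hc00]; simp
    have h2 : ((Tu⁻¹ : (V →ₗ[k] V)ˣ) : V →ₗ[k] V) ((Tu : V →ₗ[k] V) v) = v := by
      rw [← Module.End.mul_apply, ← Units.val_mul, inv_mul_cancel]
      simp
    rw [h1] at h2
    simp at h2
    exact hv h2.symm
  obtain ⟨d, hd⟩ := IsAlgClosed.exists_pow_nat_eq (k := k) c0⁻¹ hnpos
  have hdne : d ≠ 0 := by
    intro hd0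
    rw [hd0, zero_pow hnpos.ne'] at hd
    exact inv_ne_zero hc0ne hd.symm
  set s : (V →ₗ[k] V)ˣ :=
    ⟨d • LinearMap.id, d⁻¹ • LinearMap.id,
      by ext v; simp [Module.End.mul_apply, smul_smul, mul_inv_cancel₀ hdne, inv_mul_cancel₀ hdne],
      by ext v; simp [Module.End.mul_apply, smul_smul, mul_inv_cancel₀ hdne, inv_mul_cancel₀ hdne]⟩ with hsdef
  have hscomm : ∀ u : (V →ₗ[k] V)ˣ, Commute s u := by
    intro u
    apply Units.ext
    show (d • LinearMap.id : V →ₗ[k] V) * u = u * (d • LinearMap.id : V →ₗ[k] V)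
    ext v
    simp [Module.End.mul_apply, map_smul]
  set A : (V →ₗ[k] V)ˣ := s * A0 with hAdef
  have hApow : ∀ j : ℤ, A ^ j = s ^ j * A0 ^ j := fun j => (hscomm A0).mul_zpow j
  have hAc : ∀ (j : ℤ) (X : (V →ₗ[k] V)ˣ), A ^ j * X * A ^ (-j) = A0 ^ j * X * A0 ^ (-j) := by
    intro j X
    rw [hApow, hApow]
    have h1 : s ^ j * (A0 ^ j * X) = (A0 ^ j * X) * s ^ j := ((hscomm _).zpow_left j).eq
    have h2 : s ^ (-j) * A0 ^ (-j) = A0 ^ (-j) * s ^ (-j) := ((hscomm _).zpow_left (-j)).eq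
    calc s ^ j * A0 ^ j * X * (s ^ (-j) * A0 ^ (-j))
        = s ^ j * (A0 ^ j * X) * (s ^ (-j) * A0 ^ (-j)) := by group
    _ = A0 ^ j * X * s ^ j * (s ^ (-j) * A0 ^ (-j)) := by rw [h1]
    _ = A0 ^ j * X * A0 ^ (-j) := by group
  have hAconj : ∀ (j : ℤ) (x : G) (hx : x ∈ H),
      η ⟨g ^ j * x * g ^ (-j), conjmem j x hx⟩ = A ^ j * η ⟨x, hx⟩ * A ^ (-j) := by
    intro j x hx
    rw [hA0z j x hx, ← hAc j]
  have hAn : A ^ (n : ℤ) = η e := by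
    have h1 : A0 ^ (n : ℤ) = η e * Tu := by rw [hTudef]; group
    have hs : ((s ^ (n : ℤ) : (V →ₗ[k] V)ˣ) : V →ₗ[k] V) = c0⁻¹ • LinearMap.id := by
      rw [zpow_natCast, Units.val_pow_eq_pow_val]
      show ((d • LinearMap.id : V →ₗ[k] V)) ^ n = c0⁻¹ • LinearMap.id
      rw [← Module.End.one_eq_id, smul_pow, one_pow, hd]
    rw [hApow, h1]
    apply Units.ext
    rw [Units.val_mul, Units.val_mul, hs, hc0]
    ext v
    simp [Module.End.mul_apply, map_smul, smul_smul, inv_mul_cancel₀ hc0ne, mul_inv_cancel₀ hc0ne]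
  -- the key lemma : A^j = η (g^j) whenever g^j ∈ H
  have hL : ∀ (j : ℤ) (hj : g ^ j ∈ H), A ^ j = η ⟨g ^ j, hj⟩ := by
    intro j hj
    obtain ⟨t, rfl⟩ := (hgzH j).mp hj
    rw [zpow_mul, hAn, ← map_zpow]
    apply hcong
    show ((e : G)) ^ t = g ^ ((n : ℤ) * t)
    show ((g ^ n : G)) ^ t = g ^ ((n : ℤ) * t)
    rw [← zpow_natCast g n, ← zpow_mul]
  -- decomposition of elements of K
  have hD : ∀ x ∈ K, ∃ j : ℤ, x * g ^ (-j) ∈ H := by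
    have hle : K ≤ {
        carrier := {x : G | ∃ j : ℤ, x * g ^ (-j) ∈ H},
        one_mem' := ⟨0, by simpa using H.one_mem⟩,
        mul_mem' := by
          rintro a b ⟨j, hj⟩ ⟨i, hi⟩
          refine ⟨j + i, ?_⟩
          have h1 := mul_mem hj (conjmem j _ hi)
          have h2 : a * g ^ (-j) * (g ^ j * (b * g ^ (-i)) * g ^ (-j)) =
              a * b * g ^ (-(j + i)) := by group
          rwa [h2] at h1
        inv_mem' := by
          rintro a ⟨j, hj⟩
          refine ⟨-j, ?_⟩
          have h1 := conjmem (-j) _ (inv_mem hj)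
          have h2 : g ^ (-j) * (a * g ^ (-j))⁻¹ * g ^ (-(-j)) = a⁻¹ * g ^ (-(-j)) := by group
          rwa [h2] at h1 } := by
      rw [hKdef]
      apply Subgroup.closure_le _ |>.mpr
      rintro x (hx | hx)
      · exact ⟨0, by simpa using hx⟩
      · rcases hx with rfl
        exact ⟨1, by simpa using H.one_mem⟩
    intro x hx
    exact hle hx
  -- the extension as a bare function
  set f : G → (V →ₗ[k] V)ˣ := fun x =>
    if hx : ∃ j : ℤ, x * g ^ (-j) ∈ H then
      η ⟨x * g ^ (-(Classical.choose hx)), Classical.choose_spec hx⟩ ^ (1:ℤ) *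
        A ^ (Classical.choose hx)
    else 1 with hfdef
  have hfspec : ∀ (x : G) (j : ℤ) (hj : x * g ^ (-j) ∈ H),
      f x = η ⟨x * g ^ (-j), hj⟩ * A ^ j := by
    intro x j hj
    have hex : ∃ j : ℤ, x * g ^ (-j) ∈ H := ⟨j, hj⟩
    rw [hfdef]
    simp only
    rw [dif_pos hex, zpow_one]
    set i := Classical.choose hex with hidef
    have hi : x * g ^ (-i) ∈ H := Classical.choose_spec hex
    have hji : g ^ (j - i) ∈ H := by
      have h1 := mul_mem (inv_mem hj) hi
      have h2 : (x * g ^ (-j))⁻¹ * (x * g ^ (-i)) = g ^ (j - i) := by group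
      rwa [h2] at h1
    have h2 : (⟨x * g ^ (-i), hi⟩ : H) = ⟨x * g ^ (-j), hj⟩ * ⟨g ^ (j - i), hji⟩ := by
      apply Subtype.ext
      show x * g ^ (-i) = (x * g ^ (-j)) * g ^ (j - i)
      group
    rw [h2, map_mul, ← hL _ hji, mul_assoc, ← zpow_add]
    congr 2
    omega
  have hfH : ∀ (x : G) (hx : x ∈ H), f x = η ⟨x, hx⟩ := by
    intro x hx
    have h0 : x * g ^ (-(0:ℤ)) ∈ H := by simpa using hx
    rw [hfspec x 0 h0]
    rw [hcong _ x _ hx (by group)]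
    simp
  have hfg : f g = A := by
    have h1 : g * g ^ (-(1:ℤ)) ∈ H := by simpa using H.one_mem
    rw [hfspec g 1 h1]
    have h2 : (⟨g * g ^ (-(1:ℤ)), h1⟩ : H) = 1 := by
      apply Subtype.ext
      show g * g ^ (-(1:ℤ)) = 1
      group
    rw [h2, map_one, one_mul, zpow_one]
  have hfmul : ∀ x ∈ K, ∀ y ∈ K, f (x * y) = f x * f y := by
    intro x hx y hy
    obtain ⟨j, hj⟩ := hD x hx
    obtain ⟨i, hi⟩ := hD y hy
    have hyj : g ^ j * (y * g ^ (-i)) * g ^ (-j) ∈ H := conjmem j _ hi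
    have hxy : (x * y) * g ^ (-(j + i)) ∈ H := by
      have h1 := mul_mem hj hyj
      have h2 : x * g ^ (-j) * (g ^ j * (y * g ^ (-i)) * g ^ (-j)) =
          x * y * g ^ (-(j + i)) := by group
      rwa [h2] at h1
    rw [hfspec (x * y) (j + i) hxy, hfspec x j hj, hfspec y i hi]
    have h3 : (⟨x * y * g ^ (-(j + i)), hxy⟩ : H) =
        ⟨x * g ^ (-j), hj⟩ * ⟨g ^ j * (y * g ^ (-i)) * g ^ (-j), hyj⟩ := by
      apply Subtype.ext
      show x * y * g ^ (-(j + i)) = (x * g ^ (-j)) * (g ^ j * (y * g ^ (-i)) * g ^ (-j))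
      group
    rw [h3, map_mul, hAconj j _ hi]
    have h4 : A ^ (-j) * A ^ (j + i) = A ^ i := by rw [← zpow_add]; congr 1; omega
    calc η ⟨x * g ^ (-j), hj⟩ * (A ^ j * η ⟨y * g ^ (-i), hi⟩ * A ^ (-j)) * A ^ (j + i)
        = η ⟨x * g ^ (-j), hj⟩ * A ^ j * η ⟨y * g ^ (-i), hi⟩ * (A ^ (-j) * A ^ (j + i)) := by
          group
    _ = η ⟨x * g ^ (-j), hj⟩ * A ^ j * (η ⟨y * g ^ (-i), hi⟩ * A ^ i) := by rw [h4]; group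
  -- assemble the monoid hom
  refine ⟨{
      toFun := fun x => f x.1,
      map_one' := by
        show f ((1 : K.topologicalClosure) : G) = 1
        rw [show ((1 : K.topologicalClosure) : G) = 1 from rfl, hfH 1 H.one_mem,
          show (⟨1, H.one_mem⟩ : H) = 1 from rfl, map_one]
      map_mul' := fun x y => hfmul x.1 (hKc _ x.2) y.1 (hKc _ y.2) },
    ?_, ?_, ⟨1, ?_⟩, ⟨c, ?_⟩⟩
  · -- open kernel
    apply Subgroup.isOpen_mono (H₁ := M.subgroupOf K.topologicalClosure)
    · intro x hx
      rw [Subgroup.mem_subgroupOf] at hx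
      rw [MonoidHom.mem_ker]
      show f x.1 = 1
      rw [hfH x.1 (hMH hx), (hMmem _ (hMH hx)).mp hx]
    · have h1 : ((M.subgroupOf K.topologicalClosure) : Set K.topologicalClosure) =
          Subtype.val ⁻¹' (M : Set G) := by
        ext x
        simp [Subgroup.mem_subgroupOf]
      rw [h1]
      exact hMopen.preimage continuous_subtype_val
  · -- irreducibility
    intro W hW
    apply hηirr W
    intro h v hv
    have hmem : (h : G) ∈ K.topologicalClosure := Subgroup.le_topologicalClosure _ (hHK h.2)
    have := hW ⟨h.1, hmem⟩ v hv
    have heq : f h.1 = η h := by rw [hfH h.1 h.2]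
    rw [show ((⟨h.1, hmem⟩ : K.topologicalClosure)) = ⟨h.1, hmem⟩ from rfl] at this
    simpa [heq] using this
  · -- restriction to H
    intro x hx
    show f x = 1 * η ⟨x, hx⟩ * 1⁻¹
    rw [hfH x hx]
    group
  · -- p-power order
    show (f g) ^ (p ^ c) = 1
    rw [hfg]
    have h1 : g ^ ((p ^ c : ℕ) : ℤ) ∈ H := by rw [zpow_natCast]; exact hgpcH
    have h2 : A ^ ((p ^ c : ℕ) : ℤ) = η ⟨g ^ ((p ^ c : ℕ) : ℤ), h1⟩ := hL _ h1
    have h3 : η ⟨g ^ ((p ^ c : ℕ) : ℤ), h1⟩ = 1 := by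
      rw [hcong _ (g ^ (p ^ c)) _ hgpcH (by rw [zpow_natCast])]
      exact (hMmem _ hgpcH).mp hgpcM
    rw [← zpow_natCast A, h2, h3]
end

section
/- Let Γ be a compact topological group, k a complete non-archimedean field, and T : Γ → k a continuous function that is the trace of a continuous semisimple representation ρ : Γ → GL_n(k̄). If T' : Γ → k is the trace of another continuous semisimple representation ρ' : Γ → GL_n(k̄) and T = T', then ρ ≅ ρ'. -/
namespace BN

variable {k A : Type*} [Field k] [Ring A] [Algebra k A]

section Act
variable (k)
variable {P : Type*} [AddCommGroup P] [Module A P] [Module k P] [IsScalarTower k A P]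

/-- The action of `a : A` on `P` as a `k`-linear endomorphism. -/
noncomputable def actK (a : A) : P →ₗ[k] P where
  toFun x := a • x
  map_add' := smul_add a
  map_smul' c x := smul_comm a c x

@[simp] lemma actK_apply (a : A) (x : P) : actK k a x = a • x := rfl

end Act

section Act2
variable {P Q : Type*} [AddCommGroup P] [Module A P] [Module k P] [IsScalarTower k A P]
  [AddCommGroup Q] [Module A Q] [Module k Q] [IsScalarTower k A Q]

/-- Characters are isomorphism invariants. -/
lemma trace_actK_eq_of_equiv [Module.Finite k P] (e : P ≃ₗ[A] Q) (a : A) :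
    LinearMap.trace k P (actK k a) = LinearMap.trace k Q (actK k a) := by
  have h : (e.restrictScalars k).conj (actK k a) = actK k a := by
    ext x
    simp [LinearEquiv.conj_apply, map_smul]
  rw [← h, LinearMap.trace_conj']

instance fdSubmodule [FiniteDimensional k P] (p : Submodule A P) : FiniteDimensional k p :=
  FiniteDimensional.of_injective (p.subtype.restrictScalars k) p.injective_subtype

end Act2




variable {A : Type*} [Ring A]
variable {P : Type*} [AddCommGroup P] [Module A P]

/-- Any simple submodule contained in a sup of simple submodules is isomorphic to one of them. -/
lemma exists_equiv_of_le_iSup [IsSemisimpleModule A P] {ι : Sort*} (T : ι → Submodule A P)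
    (hT : ∀ i, IsSimpleModule A (T i)) {T₀ : Submodule A P} (h0 : IsSimpleModule A T₀)
    (hle : T₀ ≤ ⨆ i, T i) : ∃ i, Nonempty (T₀ ≃ₗ[A] T i) := by
  obtain ⟨C, hC⟩ := exists_isCompl T₀
  set π := T₀.projectionOnto C hC with hπ
  have hne : ∃ i, π ∘ₗ (T i).subtype ≠ 0 := by
    by_contra hall
    push_neg at hall
    have hker : ∀ i, T i ≤ LinearMap.ker π := by
      intro i x hx
      have h := congrArg (fun f => f ⟨x, hx⟩) (hall i)
      simpa using h
    have hle2 : T₀ ≤ LinearMap.ker π := hle.trans (iSup_le hker)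
    have hnt : Nontrivial T₀ := h0.nontrivial
    obtain ⟨x, hx⟩ := exists_ne (0 : T₀)
    have hx0 : π (x : P) = 0 := hle2 x.2
    rw [Submodule.projectionOnto_apply_left hC x] at hx0
    exact hx hx0
  obtain ⟨i, hi⟩ := hne
  have := hT i
  have hbij := LinearMap.bijective_of_ne_zero (N := T₀) hi
  exact ⟨i, ⟨(LinearEquiv.ofBijective _ hbij).symm⟩⟩

/-- A submodule of a semisimple module is the sup of the simple submodules it contains. -/
lemma eq_iSup_simple_le [IsSemisimpleModule A P] (q : Submodule A P) :
    q = ⨆ (T : Submodule A P) (_ : IsSimpleModule A T ∧ T ≤ q), T := by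
  conv_lhs => rw [← IsSemisimpleModule.sSup_simples_le q]
  rw [sSup_eq_iSup]
  rfl



variable {A : Type*} [Ring A]
variable {P Q : Type*} [AddCommGroup P] [Module A P] [AddCommGroup Q] [Module A Q]

lemma map_simple {T : Submodule A P} (hT : IsSimpleModule A T) (φ : P →ₗ[A] Q) :
    T.map φ = ⊥ ∨ (IsSimpleModule A (T.map φ) ∧ Nonempty ((T.map φ) ≃ₗ[A] T)) := by
  have hrange : LinearMap.range (φ ∘ₗ T.subtype) = T.map φ := by
    rw [LinearMap.range_comp, Submodule.range_subtype]
  rcases LinearMap.injective_or_eq_zero (φ ∘ₗ T.subtype) with hinj | hzero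
  · right
    have e : T ≃ₗ[A] LinearMap.range (φ ∘ₗ T.subtype) := LinearEquiv.ofInjective _ hinj
    rw [hrange] at e
    exact ⟨IsSimpleModule.congr e.symm, ⟨e.symm⟩⟩
  · left
    rw [← hrange, hzero, LinearMap.range_zero]

variable (S : Type*) [AddCommGroup S] [Module A S]

variable (A P) in
/-- The `S`-isotypic component. -/
def isotypic : Submodule A P :=
  ⨆ (T : Submodule A P) (_ : IsSimpleModule A T ∧ Nonempty (T ≃ₗ[A] S)), T

lemma le_isotypic {T : Submodule A P} (h : IsSimpleModule A T ∧ Nonempty (T ≃ₗ[A] S)) :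
    T ≤ isotypic A P S :=
  le_iSup₂_of_le T h le_rfl

lemma equiv_of_simple_le_isotypic [IsSemisimpleModule A P] {T₀ : Submodule A P}
    (h0 : IsSimpleModule A T₀) (hle : T₀ ≤ isotypic A P S) : Nonempty (T₀ ≃ₗ[A] S) := by
  have h : isotypic A P S =
      ⨆ i : {T : Submodule A P // IsSimpleModule A T ∧ Nonempty (T ≃ₗ[A] S)}, (i : Submodule A P) :=
    le_antisymm (iSup₂_le fun T hT => le_iSup_of_le ⟨T, hT⟩ le_rfl)
      (iSup_le fun i => le_iSup₂_of_le i.1 i.2 le_rfl)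
  rw [h] at hle
  obtain ⟨i, ⟨e⟩⟩ := exists_equiv_of_le_iSup _ (fun i => i.2.1) h0 hle
  exact ⟨e.trans i.2.2.some⟩

lemma map_isotypic_le (φ : P →ₗ[A] P) : (isotypic A P S).map φ ≤ isotypic A P S := by
  rw [isotypic, Submodule.map_iSup]
  refine iSup_le fun T => ?_
  rw [Submodule.map_iSup]
  refine iSup_le fun hT => ?_
  rcases map_simple hT.1 φ with hbot | ⟨hs, ⟨e⟩⟩
  · rw [hbot]; exact bot_le
  · exact le_isotypic S ⟨hs, ⟨e.trans hT.2.some⟩⟩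

lemma proj_isotypic_comm [IsSemisimpleModule A P] {W' : Submodule A P}
    (hC : IsCompl (isotypic A P S) W') (f : P →ₗ[A] P)
    (hfW : ∀ x ∈ isotypic A P S, f x = x) (hfW' : ∀ x ∈ W', f x = 0) (φ : P →ₗ[A] P) :
    f ∘ₗ φ = φ ∘ₗ f := by
  set W := isotypic A P S with hWdef
  have hdecomp : ∀ x : P, ∃ w ∈ W, ∃ w' ∈ W', x = w + w' := by
    intro x
    have hx : x ∈ W ⊔ W' := by rw [hC.sup_eq_top]; trivial
    obtain ⟨w, hw, w', hw', hx⟩ := Submodule.mem_sup.mp hx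
    exact ⟨w, hw, w', hw', hx.symm⟩
  have hrange : ∀ x : P, f x ∈ W := by
    intro x
    obtain ⟨w, hw, w', hw', rfl⟩ := hdecomp x
    rw [map_add, hfW w hw, hfW' w' hw', add_zero]
    exact hw
  have hker : ∀ x : P, f x = 0 → x ∈ W' := by
    intro x hx
    obtain ⟨w, hw, w', hw', rfl⟩ := hdecomp x
    rw [map_add, hfW w hw, hfW' w' hw', add_zero] at hx
    rw [hx, zero_add]
    exact hw'
  -- φ maps W' into W'
  have sub2 : W'.map φ ≤ W' := by
    conv_lhs => rw [eq_iSup_simple_le W', Submodule.map_iSup]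
    refine iSup_le fun T => ?_
    rw [Submodule.map_iSup]
    refine iSup_le fun hT => ?_
    rcases map_simple hT.1 φ with hbot | ⟨hs, ⟨e⟩⟩
    · rw [hbot]; exact bot_le
    · set R := T.map φ with hR
      rcases LinearMap.injective_or_eq_zero (f ∘ₗ R.subtype) with hinj | hzero
      · exfalso
        have hrle : LinearMap.range (f ∘ₗ R.subtype) ≤ W := by
          rintro x ⟨y, rfl⟩
          exact hrange _
        have hrs : IsSimpleModule A (LinearMap.range (f ∘ₗ R.subtype)) :=
          IsSimpleModule.congr (LinearEquiv.ofInjective _ hinj).symm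
        obtain ⟨eS⟩ := equiv_of_simple_le_isotypic S hrs hrle
        have eTS : Nonempty (T ≃ₗ[A] S) :=
          ⟨e.symm.trans ((LinearEquiv.ofInjective _ hinj).trans eS)⟩
        have hTW : T ≤ W := le_isotypic S ⟨hT.1, eTS⟩
        have hTbot : T ≤ ⊥ := by
          have := hC.disjoint
          exact fun x hx => this.le_bot ⟨hTW hx, hT.2 hx⟩
        have : Nontrivial T := hT.1.nontrivial
        obtain ⟨x, hx⟩ := exists_ne (0 : T)
        exact hx (Subtype.ext (hTbot x.2))
      · intro x hx
        obtain ⟨y, hy, rfl⟩ := hx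
        have : f (φ y) = 0 := by
          have hyR : φ y ∈ R := Submodule.mem_map_of_mem hy
          have := congrArg (fun g => g ⟨φ y, hyR⟩) hzero
          simpa using this
        exact hker _ this
  -- now conclude
  ext x
  obtain ⟨w, hw, w', hw', rfl⟩ := hdecomp x
  have hφw : φ w ∈ W := map_isotypic_le S φ (Submodule.mem_map_of_mem hw)
  have hφw' : φ w' ∈ W' := sub2 (Submodule.mem_map_of_mem hw')
  simp only [LinearMap.comp_apply, map_add]
  rw [hfW w hw, hfW' w' hw', hfW _ hφw, hfW' _ hφw']
  simp



section Density

variable {k A : Type*} [Field k] [Ring A] [Algebra k A]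

lemma isSemisimpleModule_pi {ι : Type*} [Finite ι] [DecidableEq ι] {P : Type*} [AddCommGroup P]
    [Module A P] [IsSemisimpleModule A P] : IsSemisimpleModule A (ι → P) := by
  apply isSemisimpleModule_of_isSemisimpleModule_submodule'
    (p := fun i => LinearMap.range (LinearMap.single A (fun _ : ι => P) i))
  · intro i
    have hinj : Function.Injective (LinearMap.single A (fun _ : ι => P) i) := by
      rw [LinearMap.coe_single]
      exact Pi.single_injective i
    exact IsSemisimpleModule.congr (LinearEquiv.ofInjective _ hinj).symm
  · exact LinearMap.iSup_range_single A _

/-- Jacobson density, in the form we need: an `A`-linear endomorphism commuting with all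
`A`-linear endomorphisms of a finite-dimensional semisimple module is given by the action
of an element of `A`. -/
theorem exists_smul_eq_of_comm {P : Type*} [AddCommGroup P] [Module A P] [Module k P]
    [IsScalarTower k A P] [FiniteDimensional k P] [IsSemisimpleModule A P]
    (f : P →ₗ[A] P) (hf : ∀ φ : P →ₗ[A] P, f ∘ₗ φ = φ ∘ₗ f) :
    ∃ a : A, ∀ x : P, a • x = f x := by
  classical
  obtain ⟨m, b, hb⟩ := Module.Finite.exists_fin (R := k) (M := P)
  haveI : IsSemisimpleModule A (Fin m → P) := isSemisimpleModule_pi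
  set C : Submodule A (Fin m → P) := Submodule.span A {b} with hCdef
  obtain ⟨D, hCD⟩ := exists_isCompl C
  set pr : (Fin m → P) →ₗ[A] (Fin m → P) := C.subtype ∘ₗ C.projectionOnto D hCD with hprdef
  have hprC : ∀ x ∈ C, pr x = x := by
    intro x hx
    have := Submodule.projectionOnto_apply_left hCD ⟨x, hx⟩
    simp only [hprdef, LinearMap.comp_apply]
    rw [this]
    rfl
  have hrange : ∀ x, pr x ∈ C := fun x => (C.projectionOnto D hCD x).2
  set F : (Fin m → P) →ₗ[A] (Fin m → P) := LinearMap.pi (fun i => f ∘ₗ LinearMap.proj i) with hFdef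
  have hFapp : ∀ (w : Fin m → P) i, F w i = f (w i) := fun w i => rfl
  have hsingle : ∀ w : Fin m → P, ∑ j, LinearMap.single A (fun _ : Fin m => P) j (w j) = w := by
    intro w
    have := Finset.univ_sum_single w
    simpa [LinearMap.coe_single] using this
  have hcomm : ∀ w : Fin m → P, F (pr w) = pr (F w) := by
    intro w
    set φij : Fin m → Fin m → (P →ₗ[A] P) := fun i j =>
      (LinearMap.proj i) ∘ₗ pr ∘ₗ (LinearMap.single A (fun _ : Fin m => P) j) with hφdef
    have hexpand : ∀ (w : Fin m → P) i, pr w i = ∑ j, φij i j (w j) := by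
      intro w i
      conv_lhs => rw [← hsingle w, map_sum]
      rw [Finset.sum_apply]
      rfl
    funext i
    rw [hFapp, hexpand, map_sum, hexpand]
    refine Finset.sum_congr rfl fun j _ => ?_
    have h2 := congrArg (fun g => g (w j)) (hf (φij i j))
    simp only [LinearMap.comp_apply] at h2
    rw [hFapp]
    exact h2
  have hbC : b ∈ C := Submodule.mem_span_singleton_self b
  have hFb : F b ∈ C := by rw [← hprC b hbC, hcomm]; exact hrange _
  obtain ⟨a, ha⟩ := Submodule.mem_span_singleton.mp hFb
  refine ⟨a, ?_⟩
  have heq : (actK k a : P →ₗ[k] P) = f.restrictScalars k := by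
    apply LinearMap.ext_on hb
    rintro x ⟨i, rfl⟩
    have hai := congrArg (fun w => w i) ha
    simp only [Pi.smul_apply] at hai
    simpa [actK_apply, hFapp] using hai
  intro x
  exact LinearMap.ext_iff.mp heq x

end Density

section Main

variable {k A : Type*} [Field k] [Ring A] [Algebra k A]
variable {M N : Type*} [AddCommGroup M] [Module A M] [Module k M] [IsScalarTower k A M]
  [AddCommGroup N] [Module A N] [Module k N] [IsScalarTower k A N]

lemma isSemisimpleModule_prod [IsSemisimpleModule A M] [IsSemisimpleModule A N] :
    IsSemisimpleModule A (M × N) := by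
  apply isSemisimpleModule_of_isSemisimpleModule_submodule'
    (p := fun b : Bool => bif b then Submodule.fst A M N else Submodule.snd A M N)
  · rintro (_ | _)
    · exact IsSemisimpleModule.congr (Submodule.sndEquiv A M N)
    · exact IsSemisimpleModule.congr (Submodule.fstEquiv A M N)
  · rw [iSup_bool_eq]
    simpa using Submodule.fst_sup_snd A M N

lemma isCompl_prod {p p' : Submodule A M} {q q' : Submodule A N}
    (h : IsCompl p p') (h' : IsCompl q q') : IsCompl (p.prod q) (p'.prod q') := by
  constructor
  · rw [disjoint_iff]
    ext x
    simp only [Submodule.mem_inf, Submodule.mem_prod, Submodule.mem_bot]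
    constructor
    · rintro ⟨⟨h1, h2⟩, ⟨h3, h4⟩⟩
      have e1 : x.1 = 0 := h.disjoint.le_bot ⟨h1, h3⟩
      have e2 : x.2 = 0 := h'.disjoint.le_bot ⟨h2, h4⟩
      exact Prod.ext e1 e2
    · rintro rfl
      simp
  · rw [codisjoint_iff, eq_top_iff]
    rintro ⟨x, y⟩ -
    have hx : x ∈ p ⊔ p' := by rw [h.sup_eq_top]; trivial
    have hy : y ∈ q ⊔ q' := by rw [h'.sup_eq_top]; trivial
    obtain ⟨a, ha, a', ha', rfl⟩ := Submodule.mem_sup.mp hx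
    obtain ⟨b, hb, b', hb', rfl⟩ := Submodule.mem_sup.mp hy
    exact Submodule.mem_sup.mpr ⟨(a, b), ⟨ha, hb⟩, (a', b'), ⟨ha', hb'⟩, rfl⟩

lemma isotypic_prod (S : Type*) [AddCommGroup S] [Module A S] :
    isotypic A (M × N) S = (isotypic A M S).prod (isotypic A N S) := by
  refine le_antisymm ?_ ?_
  · refine iSup₂_le fun T hT => ?_
    intro x hx
    constructor
    · rcases map_simple hT.1 (LinearMap.fst A M N) with hbot | ⟨hs, ⟨e⟩⟩
      · have : x.1 ∈ T.map (LinearMap.fst A M N) := ⟨x, hx, rfl⟩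
        rw [hbot] at this
        simp only [Submodule.mem_bot] at this
        rw [this]
        exact Submodule.zero_mem _
      · exact le_isotypic S ⟨hs, ⟨e.trans hT.2.some⟩⟩ ⟨x, hx, rfl⟩
    · rcases map_simple hT.1 (LinearMap.snd A M N) with hbot | ⟨hs, ⟨e⟩⟩
      · have : x.2 ∈ T.map (LinearMap.snd A M N) := ⟨x, hx, rfl⟩
        rw [hbot] at this
        simp only [Submodule.mem_bot] at this
        rw [this]
        exact Submodule.zero_mem _
      · exact le_isotypic S ⟨hs, ⟨e.trans hT.2.some⟩⟩ ⟨x, hx, rfl⟩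
  · rw [LinearMap.prod_eq_sup_map, sup_le_iff]
    constructor
    · rw [isotypic, Submodule.map_iSup]
      refine iSup_le fun T => ?_
      rw [Submodule.map_iSup]
      refine iSup_le fun hT => ?_
      rcases map_simple hT.1 (LinearMap.inl A M N) with hbot | ⟨hs, ⟨e⟩⟩
      · rw [hbot]; exact bot_le
      · exact le_isotypic S ⟨hs, ⟨e.trans hT.2.some⟩⟩
    · rw [isotypic, Submodule.map_iSup]
      refine iSup_le fun T => ?_
      rw [Submodule.map_iSup]
      refine iSup_le fun hT => ?_
      rcases map_simple hT.1 (LinearMap.inr A M N) with hbot | ⟨hs, ⟨e⟩⟩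
      · rw [hbot]; exact bot_le
      · exact le_isotypic S ⟨hs, ⟨e.trans hT.2.some⟩⟩

variable [FiniteDimensional k M] [FiniteDimensional k N]

lemma trace_proj (p q : Submodule A M) (h : IsCompl p q) :
    LinearMap.trace k M ((p.subtype ∘ₗ p.projectionOnto q h).restrictScalars k) =
      (Module.finrank k p : k) := by
  set e' := (Submodule.prodEquivOfIsCompl p q h).restrictScalars k with he'
  have key : (p.subtype ∘ₗ p.projectionOnto q h).restrictScalars k
      = e'.conj (LinearMap.prodMap (LinearMap.id : p →ₗ[k] p) (0 : q →ₗ[k] q)) := by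
    refine LinearMap.ext fun x => ?_
    obtain ⟨u, rfl⟩ := e'.surjective x
    rw [LinearEquiv.conj_apply, LinearMap.comp_apply, LinearMap.comp_apply,
      LinearEquiv.coe_coe, LinearEquiv.coe_coe, LinearEquiv.symm_apply_apply]
    have hu : e' u = (u.1 : M) + (u.2 : M) := rfl
    have hmap : (LinearMap.prodMap (LinearMap.id : p →ₗ[k] p) (0 : q →ₗ[k] q)) u = (u.1, 0) := by
      ext <;> simp
    rw [hu, hmap]
    have : e' ((u.1 : p), (0 : q)) = (u.1 : M) + ((0 : q) : M) := rfl
    rw [this]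
    simp only [LinearMap.restrictScalars_apply, LinearMap.comp_apply, map_add,
      Submodule.coe_zero, add_zero]
    rw [Submodule.projectionOnto_apply_left h u.1,
      Submodule.projectionOnto_apply_right h u.2]
    simp
  rw [key, LinearMap.trace_conj', LinearMap.trace_prodMap', LinearMap.trace_id, map_zero, add_zero]

lemma char_add_of_isCompl (p q : Submodule A M) (h : IsCompl p q) (a : A) :
    LinearMap.trace k M (actK k a) =
      LinearMap.trace k p (actK k a) + LinearMap.trace k q (actK k a) := by
  set e' := (Submodule.prodEquivOfIsCompl p q h).restrictScalars k with he'
  have key : (actK k a : M →ₗ[k] M) = e'.conj (LinearMap.prodMap (actK k a) (actK k a)) := by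
    refine LinearMap.ext fun x => ?_
    obtain ⟨u, rfl⟩ := e'.surjective x
    rw [LinearEquiv.conj_apply, LinearMap.comp_apply, LinearMap.comp_apply,
      LinearEquiv.coe_coe, LinearEquiv.coe_coe, LinearEquiv.symm_apply_apply]
    have hmap : (LinearMap.prodMap (actK k a : p →ₗ[k] p) (actK k a : q →ₗ[k] q)) u
        = (a • u.1, a • u.2) := rfl
    rw [hmap]
    have h1 : e' ((a • u.1 : p), (a • u.2 : q)) = ((a • u.1 : p) : M) + ((a • u.2 : q) : M) := rfl
    have h2 : e' u = (u.1 : M) + (u.2 : M) := rfl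
    rw [h1, h2]
    simp [smul_add]
  rw [key, LinearMap.trace_conj', LinearMap.trace_prodMap']


theorem exists_simple_iso_of_char_eq [CharZero k]
    [IsSemisimpleModule A M] [IsSemisimpleModule A N]
    (hchar : ∀ a : A, LinearMap.trace k M (actK k a) = LinearMap.trace k N (actK k a))
    (S : Submodule A M) (hS : IsSimpleModule A S) :
    ∃ T : Submodule A N, IsSimpleModule A T ∧ Nonempty (T ≃ₗ[A] S) := by
  classical
  set WM := isotypic A M S with hWM
  set WN := isotypic A N S with hWN
  obtain ⟨WM', hM⟩ := exists_isCompl WM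
  obtain ⟨WN', hN⟩ := exists_isCompl WN
  haveI : IsSemisimpleModule A (M × N) := isSemisimpleModule_prod
  set fM : M →ₗ[A] M := WM.subtype ∘ₗ WM.projectionOnto WM' hM with hfM
  set fN : N →ₗ[A] N := WN.subtype ∘ₗ WN.projectionOnto WN' hN with hfN
  set f : (M × N) →ₗ[A] (M × N) := LinearMap.prodMap fM fN with hfdef
  have hprod : isotypic A (M × N) S = WM.prod WN := isotypic_prod S
  have hC : IsCompl (isotypic A (M × N) S) (WM'.prod WN') := by
    rw [hprod]; exact isCompl_prod hM hN
  have hfW : ∀ x ∈ isotypic A (M × N) S, f x = x := by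
    rw [hprod]
    rintro ⟨x, y⟩ ⟨hx, hy⟩
    have h1 : fM x = x := by
      have := Submodule.projectionOnto_apply_left hM ⟨x, hx⟩
      simp only [hfM, LinearMap.comp_apply]
      rw [this]
      rfl
    have h2 : fN y = y := by
      have := Submodule.projectionOnto_apply_left hN ⟨y, hy⟩
      simp only [hfN, LinearMap.comp_apply]
      rw [this]
      rfl
    simp [hfdef, h1, h2]
  have hfW' : ∀ x ∈ WM'.prod WN', f x = 0 := by
    rintro ⟨x, y⟩ ⟨hx, hy⟩
    have h1 : fM x = 0 := by
      simp only [hfM, LinearMap.comp_apply]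
      rw [Submodule.projectionOnto_apply_of_mem_right hM hx]
      simp
    have h2 : fN y = 0 := by
      simp only [hfN, LinearMap.comp_apply]
      rw [Submodule.projectionOnto_apply_of_mem_right hN hy]
      simp
    simp [hfdef, h1, h2]
  have hcomm := proj_isotypic_comm S hC f hfW hfW'
  obtain ⟨a, ha⟩ := exists_smul_eq_of_comm (k := k) f hcomm
  have haM : (actK k a : M →ₗ[k] M) = fM.restrictScalars k := by
    refine LinearMap.ext fun x => ?_
    have := congrArg Prod.fst (ha (x, 0))
    simpa [hfdef] using this
  have haN : (actK k a : N →ₗ[k] N) = fN.restrictScalars k := by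
    refine LinearMap.ext fun y => ?_
    have := congrArg Prod.snd (ha (0, y))
    simpa [hfdef] using this
  have htr := hchar a
  rw [haM, haN, hfM, hfN, trace_proj, trace_proj] at htr
  have hfr : Module.finrank k WM = Module.finrank k WN := Nat.cast_injective htr
  have hSle : S ≤ WM := le_isotypic S ⟨hS, ⟨LinearEquiv.refl A S⟩⟩
  have hWMnt : Nontrivial WM := by
    have : Nontrivial S := hS.nontrivial
    obtain ⟨s, hs⟩ := exists_ne (0 : S)
    exact ⟨⟨⟨s, hSle s.2⟩, 0, fun h => hs (by
      apply Subtype.ext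
      simpa using congrArg Subtype.val h)⟩⟩
  have hpos : 0 < Module.finrank k WM := Module.finrank_pos
  rw [hfr] at hpos
  have hWNnt : Nontrivial WN := Module.nontrivial_of_finrank_pos hpos
  by_contra hno
  push_neg at hno
  have hbot : WN = ⊥ := by
    rw [hWN, isotypic]
    refine le_bot_iff.mp (iSup₂_le fun T hT => ?_)
    exact absurd hT.2 (by simpa using (hno T hT.1))
  rw [hbot] at hWNnt
  obtain ⟨x, y, hxy⟩ := hWNnt
  exact hxy (Subtype.ext (by
    have hx := x.2
    have hy := y.2
    simp only [Submodule.mem_bot] at hx hy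
    rw [hx, hy]))


/-- A linear equivalence between two subsingleton modules. -/
def equivOfSubsingleton {M' N' : Type*} [AddCommGroup M'] [Module A M'] [AddCommGroup N']
    [Module A N'] [Subsingleton M'] [Subsingleton N'] : M' ≃ₗ[A] N' where
  toFun _ := 0
  map_add' _ _ := by simp
  map_smul' _ _ := by simp
  invFun _ := 0
  left_inv _ := Subsingleton.elim _ _
  right_inv _ := Subsingleton.elim _ _

end Main

universe u

theorem iso_of_char_eq {k A : Type*} [Field k] [CharZero k] [Ring A] [Algebra k A] (n : ℕ) :
    ∀ (M N : Type u) [AddCommGroup M] [Module A M] [Module k M] [IsScalarTower k A M]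
      [FiniteDimensional k M] [IsSemisimpleModule A M]
      [AddCommGroup N] [Module A N] [Module k N] [IsScalarTower k A N]
      [FiniteDimensional k N] [IsSemisimpleModule A N],
      Module.finrank k M = n →
      (∀ a : A, LinearMap.trace k M (actK k a) = LinearMap.trace k N (actK k a)) →
      Nonempty (M ≃ₗ[A] N) := by
  induction n using Nat.strong_induction_on with
  | _ n ih =>
    intro M N _ _ _ _ _ _ _ _ _ _ _ _ hn hchar
    have hact1 : ∀ (P : Type u) [AddCommGroup P] [Module A P] [Module k P] [IsScalarTower k A P],
        (actK k (1 : A) : P →ₗ[k] P) = LinearMap.id := by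
      intro P _ _ _ _
      refine LinearMap.ext fun x => ?_
      simp
    rcases Nat.eq_zero_or_pos n with hzero | hpos
    · haveI hM : Subsingleton M := by
        rw [hzero] at hn
        exact (Module.finrank_zero_iff (R := k)).mp hn
      have h1 := hchar 1
      rw [hact1 M, hact1 N, LinearMap.trace_id, LinearMap.trace_id, hn, hzero] at h1
      have hN0 : Module.finrank k N = 0 := by
        exact_mod_cast h1.symm
      haveI hN : Subsingleton N := (Module.finrank_zero_iff (R := k)).mp hN0
      exact ⟨equivOfSubsingleton⟩
    · haveI : Nontrivial M := Module.nontrivial_of_finrank_pos (R := k) (hn ▸ hpos)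
      obtain ⟨S, hS⟩ := IsSemisimpleModule.exists_simple_submodule A M
      obtain ⟨T, hT, ⟨eTS⟩⟩ := exists_simple_iso_of_char_eq hchar S hS
      obtain ⟨M₁, hM1⟩ := exists_isCompl S
      obtain ⟨N₁, hN1⟩ := exists_isCompl T
      have hchar₁ : ∀ a : A,
          LinearMap.trace k M₁ (actK k a) = LinearMap.trace k N₁ (actK k a) := by
        intro a
        have h1 := char_add_of_isCompl (k := k) S M₁ hM1 a
        have h2 := char_add_of_isCompl (k := k) T N₁ hN1 a
        have hST : LinearMap.trace k T (actK k a) = LinearMap.trace k S (actK k a) :=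
          trace_actK_eq_of_equiv eTS a
        have h3 := hchar a
        rw [h1, h2, hST] at h3
        exact add_left_cancel h3
      have hd : Module.finrank k M = Module.finrank k S + Module.finrank k M₁ := by
        have e := (Submodule.prodEquivOfIsCompl S M₁ hM1).restrictScalars k
        rw [← e.finrank_eq, Module.finrank_prod]
      haveI : Nontrivial S := hS.nontrivial
      have hSpos : 0 < Module.finrank k S := Module.finrank_pos
      have hlt : Module.finrank k M₁ < n := by omega
      obtain ⟨e₁⟩ := ih (Module.finrank k M₁) hlt M₁ N₁ rfl hchar₁
      exact ⟨(Submodule.prodEquivOfIsCompl S M₁ hM1).symm.trans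
        ((eTS.symm.prodCongr e₁).trans (Submodule.prodEquivOfIsCompl T N₁ hN1))⟩


universe v

/-- Universe-flexible version of `iso_of_char_eq`. -/
theorem iso_of_char_eq' {k A : Type*} [Field k] [CharZero k] [Ring A] [Algebra k A]
    (M : Type u) (N : Type v) [AddCommGroup M] [Module A M] [Module k M] [IsScalarTower k A M]
    [FiniteDimensional k M] [IsSemisimpleModule A M]
    [AddCommGroup N] [Module A N] [Module k N] [IsScalarTower k A N]
    [FiniteDimensional k N] [IsSemisimpleModule A N]
    (hchar : ∀ a : A, LinearMap.trace k M (actK k a) = LinearMap.trace k N (actK k a)) :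
    Nonempty (M ≃ₗ[A] N) := by
  let UM := ULift.{v} M
  let UN := ULift.{u} N
  haveI : FiniteDimensional k UM :=
    LinearEquiv.finiteDimensional (ULift.moduleEquiv (R := k) (M := M)).symm
  haveI : FiniteDimensional k UN :=
    LinearEquiv.finiteDimensional (ULift.moduleEquiv (R := k) (M := N)).symm
  haveI : IsSemisimpleModule A UM :=
    IsSemisimpleModule.congr (ULift.moduleEquiv (R := A) (M := M))
  haveI : IsSemisimpleModule A UN :=
    IsSemisimpleModule.congr (ULift.moduleEquiv (R := A) (M := N))
  have hcharU : ∀ a : A,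
      LinearMap.trace k UM (actK k a) = LinearMap.trace k UN (actK k a) := by
    intro a
    rw [trace_actK_eq_of_equiv (ULift.moduleEquiv (R := A) (M := M)) a,
      trace_actK_eq_of_equiv (ULift.moduleEquiv (R := A) (M := N)) a]
    exact hchar a
  obtain ⟨e⟩ := iso_of_char_eq (k := k) (A := A) (Module.finrank k UM) UM UN rfl hcharU
  exact ⟨((ULift.moduleEquiv (R := A) (M := M)).symm.trans e).trans
    (ULift.moduleEquiv (R := A) (M := N))⟩

end BN

namespace BN

variable {k Γ V : Type*} [Field k] [Group Γ] [AddCommGroup V] [Module k V]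

/-- The `k`-linear version of `Representation.asModuleEquiv`. -/
noncomputable def repEquiv (ρ : Representation k Γ V) : ρ.asModule ≃ₗ[k] V :=
  { ρ.asModuleEquiv with map_smul' := fun _ _ => rfl }

lemma repEquiv_apply (ρ : Representation k Γ V) (x : ρ.asModule) :
    repEquiv ρ x = ρ.asModuleEquiv x := rfl

lemma repEquiv_symm_apply (ρ : Representation k Γ V) (v : V) :
    (repEquiv ρ).symm v = ρ.asModuleEquiv.symm v := rfl

lemma asModule_isScalarTower (ρ : Representation k Γ V) :
    IsScalarTower k (MonoidAlgebra k Γ) ρ.asModule := by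
  constructor
  intro c a x
  apply ρ.asModuleEquiv.injective
  rw [ρ.asModuleEquiv_map_smul ((c • a) : MonoidAlgebra k Γ) x]
  have h1 : ρ.asAlgebraHom (c • a) = c • ρ.asAlgebraHom a :=
    map_smul ρ.asAlgebraHom.toLinearMap c a
  rw [h1]
  have h2 : ρ.asModuleEquiv (c • (a • x)) = c • ρ.asModuleEquiv (a • x) := rfl
  rw [h2, ρ.asModuleEquiv_map_smul a x]
  rfl

lemma conj_actK_of (ρ : Representation k Γ V) (g : Γ) :
    haveI := asModule_isScalarTower ρ
    (repEquiv ρ).conj (actK k (MonoidAlgebra.of k Γ g)) = ρ g := by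
  haveI := asModule_isScalarTower ρ
  refine LinearMap.ext fun v => ?_
  rw [LinearEquiv.conj_apply_apply]
  rw [repEquiv_apply, actK_apply, ρ.asModuleEquiv_map_smul, Representation.asAlgebraHom_of]
  congr 1

end BN

/-- Brauer–Nesbitt: two semisimple finite-dimensional representations of a group over an
algebraically closed field of characteristic zero with equal characters are isomorphic. -/
theorem semisimple_rep_eq_of_trace_eq
    {k Γ V V' : Type*} [Field k] [IsAlgClosed k] [CharZero k] [Group Γ]
    [AddCommGroup V] [Module k V] [FiniteDimensional k V]
    [AddCommGroup V'] [Module k V'] [FiniteDimensional k V']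
    (ρ : Representation k Γ V) (ρ' : Representation k Γ V')
    (hss : IsSemisimpleModule (MonoidAlgebra k Γ) ρ.asModule)
    (hss' : IsSemisimpleModule (MonoidAlgebra k Γ) ρ'.asModule)
    (n : ℕ) (hV : Module.finrank k V = n) (hV' : Module.finrank k V' = n)
    (htr : ∀ g : Γ, LinearMap.trace k V (ρ g) = LinearMap.trace k V' (ρ' g)) :
    ∃ e : V ≃ₗ[k] V', ∀ (g : Γ) (v : V), e (ρ g v) = ρ' g (e v) := by
  classical
  haveI t1 := BN.asModule_isScalarTower ρ
  haveI t2 := BN.asModule_isScalarTower ρ'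
  haveI f1 : FiniteDimensional k ρ.asModule :=
    LinearEquiv.finiteDimensional (BN.repEquiv ρ).symm
  haveI f2 : FiniteDimensional k ρ'.asModule :=
    LinearEquiv.finiteDimensional (BN.repEquiv ρ').symm
  have hchar : ∀ a : MonoidAlgebra k Γ,
      LinearMap.trace k ρ.asModule (BN.actK k a) =
        LinearMap.trace k ρ'.asModule (BN.actK k a) := by
    let actL : MonoidAlgebra k Γ →ₗ[k] Module.End k ρ.asModule :=
      { toFun := fun a => BN.actK k a
        map_add' := fun a b => LinearMap.ext fun x => by simp [BN.actK_apply, add_smul]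
        map_smul' := fun c a => LinearMap.ext fun x => by
          simp only [BN.actK_apply, RingHom.id_apply, LinearMap.smul_apply]
          rw [smul_assoc] }
    let actL' : MonoidAlgebra k Γ →ₗ[k] Module.End k ρ'.asModule :=
      { toFun := fun a => BN.actK k a
        map_add' := fun a b => LinearMap.ext fun x => by simp [BN.actK_apply, add_smul]
        map_smul' := fun c a => LinearMap.ext fun x => by
          simp only [BN.actK_apply, RingHom.id_apply, LinearMap.smul_apply]
          rw [smul_assoc] }
    let T1 : MonoidAlgebra k Γ →ₗ[k] k :=
      (LinearMap.trace k V) ∘ₗ (((BN.repEquiv ρ).conj : Module.End k ρ.asModule ≃ₗ[k]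
        Module.End k V) : Module.End k ρ.asModule →ₗ[k] Module.End k V) ∘ₗ actL
    let T2 : MonoidAlgebra k Γ →ₗ[k] k :=
      (LinearMap.trace k V') ∘ₗ (((BN.repEquiv ρ').conj : Module.End k ρ'.asModule ≃ₗ[k]
        Module.End k V') : Module.End k ρ'.asModule →ₗ[k] Module.End k V') ∘ₗ actL'
    have hT : T1 = T2 := by
      apply MonoidAlgebra.lhom_ext'
      intro g
      apply LinearMap.ext_ring
      have hsingle : (MonoidAlgebra.lsingle (R := k) (S := k) (M := Γ) g) (1 : k)
          = MonoidAlgebra.of k Γ g := by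
        simp [MonoidAlgebra.of_apply]
      simp only [LinearMap.comp_apply, hsingle]
      show LinearMap.trace k V ((BN.repEquiv ρ).conj (BN.actK k (MonoidAlgebra.of k Γ g)))
        = LinearMap.trace k V' ((BN.repEquiv ρ').conj (BN.actK k (MonoidAlgebra.of k Γ g)))
      rw [BN.conj_actK_of, BN.conj_actK_of]
      exact htr g
    intro a
    have e1 : LinearMap.trace k ρ.asModule (BN.actK k a) = T1 a := by
      rw [← LinearMap.trace_conj' (BN.actK k a) (BN.repEquiv ρ)]
      rfl
    have e2 : LinearMap.trace k ρ'.asModule (BN.actK k a) = T2 a := by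
      rw [← LinearMap.trace_conj' (BN.actK k a) (BN.repEquiv ρ')]
      rfl
    rw [e1, e2, hT]
  obtain ⟨E⟩ := BN.iso_of_char_eq' (k := k) (A := MonoidAlgebra k Γ)
    ρ.asModule ρ'.asModule hchar
  refine ⟨(BN.repEquiv ρ).symm.trans ((E.restrictScalars k).trans (BN.repEquiv ρ')), ?_⟩
  intro g v
  have h1 : (BN.repEquiv ρ).symm (ρ g v)
      = (MonoidAlgebra.of k Γ g) • ((BN.repEquiv ρ).symm v) := by
    rw [BN.repEquiv_symm_apply, BN.repEquiv_symm_apply, ρ.asModuleEquiv_symm_map_rho]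
  have h3 : ∀ y, BN.repEquiv ρ' ((MonoidAlgebra.of k Γ g) • y) = ρ' g (BN.repEquiv ρ' y) := by
    intro y
    rw [BN.repEquiv_apply, ρ'.asModuleEquiv_map_smul, Representation.asAlgebraHom_of]
    rfl
  simp only [LinearEquiv.trans_apply]
  rw [h1]
  have h2 : (E.restrictScalars k) ((MonoidAlgebra.of k Γ g) • ((BN.repEquiv ρ).symm v))
      = (MonoidAlgebra.of k Γ g) • (E.restrictScalars k) ((BN.repEquiv ρ).symm v) :=
    map_smul E _ _
  rw [h2, h3]
end
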